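/- Let a disconnected graph G be factored into a connected graph H and a graph K with no isolated vertex. Then both H and K are bipartite. -/
import Mathlib


open SimpleGraph Matrix

private lemma adj_of_factor {n : ℕ} {G H K : SimpleGraph (Fin n)}
    [DecidableRel G.Adj] [DecidableRel H.Adj] [DecidableRel K.Adj]
    (hfac : G.adjMatrix ℝ = H.adjMatrix ℝ * K.adjMatrix ℝ)
    {u w v : Fin n} (h1 : H.Adj u w) (h2 : K.Adj w v) : G.Adj u v := by
  by_contra hne
  have h0 : (G.adjMatrix ℝ) u v = 0 := by simp [adjMatrix_apply, hne]
  rw [hfac, mul_apply] at h0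
  have hpos : (0:ℝ) < ∑ x, (H.adjMatrix ℝ) u x * (K.adjMatrix ℝ) x v := by
    apply Finset.sum_pos'
    · intro i _
      simp only [adjMatrix_apply]
      split <;> split <;> norm_num
    · exact ⟨w, Finset.mem_univ w, by simp [adjMatrix_apply, h1, h2]⟩
  linarith

private lemma adj_of_factor' {n : ℕ} {G H K : SimpleGraph (Fin n)}
    [DecidableRel G.Adj] [DecidableRel H.Adj] [DecidableRel K.Adj]
    (hfac : G.adjMatrix ℝ = H.adjMatrix ℝ * K.adjMatrix ℝ)
    {u w v : Fin n} (h1 : K.Adj u w) (h2 : H.Adj w v) : G.Adj u v :=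
  (adj_of_factor hfac h2.symm h1.symm).symm

private lemma reach_dist2 {n : ℕ} {G H K : SimpleGraph (Fin n)}
    [DecidableRel G.Adj] [DecidableRel H.Adj] [DecidableRel K.Adj]
    (hfac : G.adjMatrix ℝ = H.adjMatrix ℝ * K.adjMatrix ℝ)
    (hK : ∀ v, 0 < K.degree v)
    {u w v : Fin n} (h1 : H.Adj u w) (h2 : H.Adj w v) : G.Reachable u v := by
  obtain ⟨x, hx⟩ := (K.degree_pos_iff_exists_adj w).mp (hK w)
  exact (adj_of_factor hfac h1 hx).reachable.trans
    (adj_of_factor hfac h2.symm hx).reachable.symm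

private lemma reach_of_even_walk {n : ℕ} {G H K : SimpleGraph (Fin n)}
    [DecidableRel G.Adj] [DecidableRel H.Adj] [DecidableRel K.Adj]
    (hfac : G.adjMatrix ℝ = H.adjMatrix ℝ * K.adjMatrix ℝ)
    (hK : ∀ v, 0 < K.degree v) :
    ∀ {u v : Fin n} (p : H.Walk u v), Even p.length → G.Reachable u v
  | u, _, SimpleGraph.Walk.nil, _ => SimpleGraph.Reachable.refl u
  | u, v, SimpleGraph.Walk.cons h SimpleGraph.Walk.nil, he => by
      simp at he
  | u, v, SimpleGraph.Walk.cons h (SimpleGraph.Walk.cons h' q), he => by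
      have hq : Even q.length := by
        simpa [SimpleGraph.Walk.length_cons, Nat.even_add_one, parity_simps] using he
      exact (reach_dist2 hfac hK h h').trans (reach_of_even_walk hfac hK q hq)

theorem stmt14 {n : ℕ} (G H K : SimpleGraph (Fin n))
    [DecidableRel G.Adj] [DecidableRel H.Adj] [DecidableRel K.Adj]
    (hfac : G.adjMatrix ℝ = H.adjMatrix ℝ * K.adjMatrix ℝ)
    (hGdisc : ¬ G.Connected) (hHconn : H.Connected)
    (hK : ∀ v, 0 < K.degree v) :
    H.Colorable 2 ∧ K.Colorable 2 := by
  classical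
  have hnonempty : Nonempty (Fin n) := hHconn.nonempty
  have hnpre : ∃ a b : Fin n, ¬ G.Reachable a b := by
    by_contra hcon
    push_neg at hcon
    exact hGdisc ⟨fun u v => hcon u v⟩
  obtain ⟨a0, b0, hnr⟩ := hnpre
  have hab : a0 ≠ b0 := fun h => hnr (h ▸ SimpleGraph.Reachable.refl a0)
  -- every vertex has an H-neighbor
  have hHdeg : ∀ v : Fin n, ∃ w, H.Adj v w := by
    intro v
    have hu : ∃ u : Fin n, u ≠ v := by
      by_cases hv : v = a0
      · exact ⟨b0, by simp [hv, Ne.symm hab]⟩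
      · exact ⟨a0, fun h => hv h.symm⟩
    obtain ⟨u, hu⟩ := hu
    obtain ⟨p⟩ := hHconn v u
    cases p with
    | nil => exact absurd rfl hu.symm
    | cons h q => exact ⟨_, h⟩
  set c : Fin n → Prop := fun u => G.Reachable a0 u with hc
  -- every H-edge flips c
  have hflip : ∀ {u w : Fin n}, H.Adj u w → ¬ (c u ↔ c w) := by
    intro u w huw hiff
    have hall : ∀ v : Fin n, c v ↔ c u := by
      intro v
      obtain ⟨p⟩ := hHconn u v
      rcases Nat.even_or_odd p.length with hev | hod
      · have := reach_of_even_walk hfac hK p hev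
        exact ⟨fun h => h.trans this.symm, fun h => h.trans this⟩
      · have hev' : Even (SimpleGraph.Walk.cons huw.symm p).length := by
          simpa [SimpleGraph.Walk.length_cons, Nat.even_add_one] using hod
        have hwv : G.Reachable w v := reach_of_even_walk hfac hK _ hev'
        have : c v ↔ c w := ⟨fun h => h.trans hwv.symm, fun h => h.trans hwv⟩
        exact this.trans hiff.symm
    have hcu : c u := (hall a0).mp (SimpleGraph.Reachable.refl a0)
    exact hnr ((hall b0).mpr hcu)
  -- every K-edge flips c
  have hflipK : ∀ {u w : Fin n}, K.Adj u w → ¬ (c u ↔ c w) := by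
    intro u w huw hiff
    obtain ⟨x, hx⟩ := hHdeg w
    have hux : G.Adj u x := adj_of_factor' hfac huw hx
    have h1 : c u ↔ c x := ⟨fun h => h.trans hux.reachable, fun h => h.trans hux.reachable.symm⟩
    exact hflip hx (hiff.symm.trans h1)
  set f : Fin n → Fin 2 := fun v => if c v then 0 else 1 with hf
  have hfne : ∀ {u w : Fin n}, ¬ (c u ↔ c w) → f u ≠ f w := by
    intro u w h
    by_cases hu : c u <;> by_cases hw : c w
    · exact absurd (iff_of_true hu hw) h
    · norm_num [hf, hu, hw]
    · norm_num [hf, hu, hw]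
    · exact absurd (iff_of_false hu hw) h
  exact ⟨⟨SimpleGraph.Coloring.mk f fun h => hfne (hflip h)⟩,
    ⟨SimpleGraph.Coloring.mk f fun h => hfne (hflipK h)⟩⟩
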